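/- Let G̃ = A × G be the extension of a group G by an abelian group A via a 2-cocycle h, let H̃ ≤ G̃ be a subgroup, and set A_H̃ = {a ∈ A | (a,e) ∈ H̃}. Suppose g ↦ a_g is a function such that (a_g, g) ∈ H̃ whenever there exists some a with (a,g) ∈ H̃, and suppose that for all such g and all a ∈ A with (a,g') ∈ H̃ for some g', the action condition holds: g⁻¹·b − b ∈ A_H̃ for all b in the relevant coset differences (i.e., the projection of H̃ to G acts trivially on the cosets of A_H̃). Then for (a₁,g₁), (a₂,g₂) in the set Ĥ = {(a,g) ∈ G̃ | ∃a'' (a'',g) ∈ H̃}, one has (a₁,g₁)·(a₂,g₂)⁻¹ ∈ H̃ if and only if (a₁ − a_{g₁}) − (a₂ − a_{g₂}) ∈ A_H̃. -/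

import Mathlib

/-- The multiplication of the extension `A × G` determined by an action and a 2-cocycle. -/
def extMul {G A : Type*} [Group G] [AddCommGroup A] (act : G →* Multiplicative (AddAut A))
    (h : G → G → A) (p q : A × G) : A × G :=
  (p.1 + Multiplicative.toAdd (act p.2) q.1 + h p.2 q.2, p.2 * q.2)

/-- The inverse of the extension `A × G`. -/
def extInv {G A : Type*} [Group G] [AddCommGroup A] (act : G →* Multiplicative (AddAut A))
    (h : G → G → A) (p : A × G) : A × G :=
  (-(Multiplicative.toAdd (act p.2⁻¹) p.1) - h p.2⁻¹ p.2, p.2⁻¹)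

/-- The key computation behind Lemma 5.4 of the paper: in the extension `G̃ = A × G`,
given a subgroup `H̃`, a choice `g ↦ a_g` with `(a_g, g) ∈ H̃`, and assuming the projection
of `H̃` acts trivially on the cosets of `A_H̃ = {a | (a,1) ∈ H̃}`, we have
`(a₁,g₁)·(a₂,g₂)⁻¹ ∈ H̃ ↔ (a₁ − a_{g₁}) − (a₂ − a_{g₂}) ∈ A_H̃`. -/
theorem ext_coset_criterion {G A : Type*} [Group G] [AddCommGroup A]
    (act : G →* Multiplicative (AddAut A)) (h : G → G → A)
    (hcoc : ∀ g₁ g₂ g₃ : G,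
      h g₁ g₂ + h (g₁ * g₂) g₃ = h g₁ (g₂ * g₃) + Multiplicative.toAdd (act g₁) (h g₂ g₃))
    (hone₁ : ∀ g : G, h g 1 = 0) (hone₂ : ∀ g : G, h 1 g = 0)
    (H : Set (A × G))
    (Hone : ((0 : A), (1 : G)) ∈ H)
    (Hmul : ∀ p ∈ H, ∀ q ∈ H, extMul act h p q ∈ H)
    (Hinv : ∀ p ∈ H, extInv act h p ∈ H)
    (aMap : G → A)
    (haMap : ∀ g : G, (∃ a : A, (a, g) ∈ H) → (aMap g, g) ∈ H)
    (htriv : ∀ g : G, (∃ a : A, (a, g) ∈ H) → ∀ b : A, Multiplicative.toAdd (act g) b - b ∈ {a : A | (a, (1 : G)) ∈ H})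
    (a₁ a₂ : A) (g₁ g₂ : G)
    (h₁ : ∃ a : A, (a, g₁) ∈ H) (h₂ : ∃ a : A, (a, g₂) ∈ H) :
    extMul act h (a₁, g₁) (extInv act h (a₂, g₂)) ∈ H ↔
      (a₁ - aMap g₁) - (a₂ - aMap g₂) ∈ {a : A | (a, (1 : G)) ∈ H} := by
  have actinv : ∀ (g : G) (x : A), act g (Multiplicative.toAdd (act g⁻¹) x) = x := by
    intro g x
    rw [← AddAut.add_apply, ← toAdd_mul, ← map_mul, mul_inv_cancel, map_one, toAdd_one, AddAut.zero_apply]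
  have Sadd : ∀ a ∈ {a : A | (a, (1:G)) ∈ H}, ∀ b ∈ {a : A | (a, (1:G)) ∈ H},
      a + b ∈ {a : A | (a, (1:G)) ∈ H} := by
    intro a ha b hb
    have := Hmul _ ha _ hb
    simpa [extMul, hone₂] using this
  have Sneg : ∀ a ∈ {a : A | (a, (1:G)) ∈ H}, -a ∈ {a : A | (a, (1:G)) ∈ H} := by
    intro a ha
    have := Hinv _ ha
    simpa [extInv, hone₁] using this
  have hinvcoc : ∀ g : G, act g (h g⁻¹ g) = h g g⁻¹ := by
    intro g
    have := hcoc g g⁻¹ g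
    simp [hone₁, hone₂] at this
    exact this.symm
  have key : ∀ (a : A) (g : G), (∃ a', (a', g) ∈ H) →
      ((a, g) ∈ H ↔ a - aMap g ∈ {a : A | (a, (1:G)) ∈ H}) := by
    intro a g hg
    constructor
    · intro hag
      have := Hmul _ hag _ (Hinv _ (haMap g hg))
      have e : extMul act h (a, g) (extInv act h (aMap g, g)) = (a - aMap g, 1) := by
        simp only [extMul, extInv, map_sub, map_neg, actinv, hinvcoc, mul_inv_cancel,
          Prod.mk.injEq]
        exact ⟨by abel, trivial⟩
      rwa [e] at this
    · intro hs
      have := Hmul _ hs _ (haMap g hg)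
      have e : extMul act h (a - aMap g, 1) (aMap g, g) = (a, g) := by
        simp [extMul, hone₂]
      rwa [e] at this
  set g : G := g₁ * g₂⁻¹ with hg
  have hq := Hmul _ (haMap g₁ h₁) _ (Hinv _ (haMap g₂ h₂))
  have hex : ∃ a : A, (a, g) ∈ H := ⟨_, hq⟩
  have ht := htriv g hex (a₂ - aMap g₂)
  have cq := (key _ g hex).mp hq
  simp only [extMul, extInv] at hq cq ⊢
  rw [← hg]
  rw [key _ g hex]
  -- first components
  set c₁ : A := a₁ + act g₁ (-(Multiplicative.toAdd (act g₂⁻¹) a₂) - h g₂⁻¹ g₂) + h g₁ g₂⁻¹ with hc₁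
  set cq' : A := aMap g₁ + act g₁ (-(Multiplicative.toAdd (act g₂⁻¹) (aMap g₂)) - h g₂⁻¹ g₂) + h g₁ g₂⁻¹ with hcq'
  have hdiff : c₁ - aMap g =
      ((a₁ - aMap g₁) - (a₂ - aMap g₂)) +
        (-(act g (a₂ - aMap g₂) - (a₂ - aMap g₂)) + (cq' - aMap g)) := by
    have hact : act g (a₂ - aMap g₂) = act g₁ (Multiplicative.toAdd (act g₂⁻¹) (a₂ - aMap g₂)) := by
      rw [hg, map_mul, toAdd_mul, AddAut.add_apply]
    rw [hc₁, hcq', hact]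
    simp only [map_sub, map_neg]
    abel
  constructor
  · intro hp
    have h1 : c₁ - aMap g + -(-(act g (a₂ - aMap g₂) - (a₂ - aMap g₂)) + (cq' - aMap g)) ∈
        {a : A | (a, (1:G)) ∈ H} := by
      refine Sadd _ hp _ (Sneg _ (Sadd _ (Sneg _ ht) _ cq))
    rw [hdiff] at h1
    rwa [add_neg_cancel_right] at h1
  · intro hd
    rw [hdiff]
    exact Sadd _ hd _ (Sadd _ (Sneg _ ht) _ cq)
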